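/- Let a1, …, a5 > 0, b1 = (a1 + a2)/(1 + a4·a5), b3 = a5/(1 + a4·a5), and θ1, θ2, θ3, θ4 defined by θ1 = a3/(1 + a3·a4·b1), θ2 = (a3·b1 + b3)/(1 + a3·a4·b1), θ3 = a3·b3/(1 + a3·a4·b1), θ4 = a3·a4/(1 + a3·a4·b1). Suppose V, I ∈ ℝ satisfy the IV equation I = a1 − a2·(exp(a3·(V + a4·I)) − 1) − a5·(V + a4·I). Then a1 = −[θ1²·I + θ1·θ3·V + θ1²·(θ1·θ2 − θ3)/(θ3·θ4 − θ1²)] · exp(((θ3·θ4 − θ1²)/(θ1 − θ2·θ4))·(V + (θ4/θ1)·I)) / (θ3·θ4 − θ1²) + θ1²·(θ1·θ2 − θ3)/(θ3·θ4 − θ1²)². -/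

import Mathlib

set_option maxHeartbeats 1000000


theorem a1_recovery_from_theta
    (a1 a2 a3 a4 a5 b1 b3 θ1 θ2 θ3 θ4 : ℝ)
    (ha1 : 0 < a1) (ha2 : 0 < a2) (ha3 : 0 < a3) (ha4 : 0 < a4) (ha5 : 0 < a5)
    (hb1 : b1 = (a1 + a2) / (1 + a4 * a5))
    (hb3 : b3 = a5 / (1 + a4 * a5))
    (hθ1 : θ1 = a3 / (1 + a3 * a4 * b1))
    (hθ2 : θ2 = (a3 * b1 + b3) / (1 + a3 * a4 * b1))
    (hθ3 : θ3 = a3 * b3 / (1 + a3 * a4 * b1))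
    (hθ4 : θ4 = a3 * a4 / (1 + a3 * a4 * b1))
    (V I : ℝ)
    (hiv : I = a1 - a2 * (Real.exp (a3 * (V + a4 * I)) - 1) - a5 * (V + a4 * I)) :
    a1 = -((θ1 ^ 2 * I + θ1 * θ3 * V
            + θ1 ^ 2 * (θ1 * θ2 - θ3) / (θ3 * θ4 - θ1 ^ 2))
          * Real.exp ((θ3 * θ4 - θ1 ^ 2) / (θ1 - θ2 * θ4) * (V + θ4 / θ1 * I))
          / (θ3 * θ4 - θ1 ^ 2))
        + θ1 ^ 2 * (θ1 * θ2 - θ3) / (θ3 * θ4 - θ1 ^ 2) ^ 2 := by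
  have hE : (0:ℝ) < 1 + a4 * a5 := by positivity
  have hE' : (1 + a4 * a5) ≠ 0 := ne_of_gt hE
  have hb1pos : 0 < b1 := by rw [hb1]; positivity
  have hD : (0:ℝ) < 1 + a3 * a4 * b1 := by positivity
  have hD' : (1 + a3 * a4 * b1) ≠ 0 := ne_of_gt hD
  have ha3' : a3 ≠ 0 := ne_of_gt ha3
  -- numerator/denominator simplifications
  have hnum : θ3 * θ4 - θ1 ^ 2 = -(a3 ^ 2) / ((1 + a3 * a4 * b1) ^ 2 * (1 + a4 * a5)) := by
    rw [hθ1, hθ3, hθ4, hb3]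
    field_simp
    ring
  have hden : θ1 - θ2 * θ4 = a3 / ((1 + a3 * a4 * b1) ^ 2 * (1 + a4 * a5)) := by
    rw [hθ1, hθ2, hθ4, hb3]
    field_simp
    ring
  have hratio : θ4 / θ1 = a4 := by
    rw [hθ1, hθ4]
    field_simp
  have harg : (θ3 * θ4 - θ1 ^ 2) / (θ1 - θ2 * θ4) * (V + θ4 / θ1 * I)
      = -(a3 * (V + a4 * I)) := by
    rw [hnum, hden, hratio]
    field_simp
  rw [harg, Real.exp_neg]
  set E := Real.exp (a3 * (V + a4 * I)) with hEdef
  have hEpos : 0 < E := Real.exp_pos _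
  have hE0 : E ≠ 0 := ne_of_gt hEpos
  have key : a2 * E = a1 + a2 - I - a5 * (V + a4 * I) := by
    nlinarith [hiv]
  have hT2 : θ1 ^ 2 * (θ1 * θ2 - θ3) / (θ3 * θ4 - θ1 ^ 2) ^ 2 = a1 + a2 := by
    rw [hnum, hθ1, hθ2, hθ3, hb3, hb1]
    field_simp
    ring
  have hC : θ1 ^ 2 * (θ1 * θ2 - θ3) / (θ3 * θ4 - θ1 ^ 2)
      = -(a3 ^ 2 * b1) / (1 + a3 * a4 * b1) ^ 2 := by
    rw [hnum, hθ1, hθ2, hθ3, hb3]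
    field_simp
    ring
  rw [hC, hT2, hnum, hθ1, hθ3, hb3]
  have hb1' : b1 * (1 + a4 * a5) = a1 + a2 := by
    rw [hb1]; field_simp
  field_simp
  linear_combination hb1' - key
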